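/- Let k be a perfect field of characteristic p > 0 and let A be an associative flat k[[h]]-algebra, h-adically complete and separated, with A/hA isomorphic as a Poisson algebra to the algebra of functions on the Frobenius neighborhood of a point of a smooth symplectic variety. If the reduction mod h of the center of A[h⁻¹] intersected with A is contained in the Poisson center of A/hA, and the Poisson center of A/hA is one-dimensional, then the center of A[h⁻¹] equals k((h)). -/

import Mathlib

/-- Let `k` be a perfect field of characteristic `p > 0` and `A` an
associative flat `k[[h]]`-algebra, `h`-adically complete and separated, with `A/hA`
isomorphic as a Poisson algebra to the functions on the Frobenius neighbourhood of a
point of a smooth symplectic variety (in particular `A/hA` is a finite-dimensional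
commutative `k`-algebra with Poisson bracket `{a,b} = (ab - ba)/h mod h`, rendered below
by `hcomm`/`hbr`). Let `B = A[h⁻¹]` be the localization inverting `h` (rendered by
`φ, hφ...`). If the reduction mod `h` of `Z(A[h⁻¹]) ∩ A` is contained in the Poisson
center of `A/hA`, and the Poisson center of `A/hA` is one-dimensional (spanned by `1`),
then the center of `A[h⁻¹]` equals `k((h))`. -/
theorem center_of_localized_quantization_eq_laurent
    (k : Type*) [Field k] (p : ℕ) [Fact p.Prime] [CharP k p] [PerfectField k]
    (A : Type*) [Ring A] [Algebra (PowerSeries k) A] [Algebra k A]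
    [IsScalarTower k (PowerSeries k) A]
    [Module.Flat (PowerSeries k) A]
    [IsAdicComplete (Ideal.span {(PowerSeries.X : PowerSeries k)}) A]
    -- `h` and `h`-torsion-freeness (flatness)
    (h : A) (hh : h = algebraMap (PowerSeries k) A PowerSeries.X)
    (hreg : ∀ a : A, h * a = 0 → a = 0)
    -- `A/hA` is commutative, finite-dimensional, with Poisson bracket `br`
    (Q : Type*) [CommRing Q] [Algebra k Q] [FiniteDimensional k Q]
    (π : A →ₐ[k] Q) (hπsurj : Function.Surjective π)
    (hπker : ∀ a : A, π a = 0 ↔ ∃ b : A, a = h * b)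
    (br : Q →ₗ[k] Q →ₗ[k] Q)
    (hbr : ∀ a b : A, ∃ c : A, a * b - b * a = h * c ∧ π c = br (π a) (π b))
    -- the Poisson center of `A/hA` is one-dimensional
    (hPcenter : {q : Q | ∀ q' : Q, br q q' = 0} = Set.range (algebraMap k Q))
    -- the localization `B = A[h⁻¹]`
    (B : Type*) [Ring B] (φ : A →+* B)
    (hφinj : Function.Injective φ)
    (hu : IsUnit (φ h))
    (hφgen : ∀ b : B, ∃ (a : A) (n : ℕ), b * φ h ^ n = φ a)
    -- the reduction mod `h` of `Z(A[h⁻¹]) ∩ A` lies in the Poisson center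
    (hZred : ∀ a : A, φ a ∈ Set.center B → ∀ q' : Q, br (π a) q' = 0) :
    Set.center B = {b : B | ∃ n : ℕ,
      b * φ h ^ n ∈ Set.range fun f : PowerSeries k => φ (algebraMap (PowerSeries k) A f)} :=  by
  classical
  -- `h` is central in `A`
  have hcentral : ∀ x : A, h * x = x * h := by
    intro x; rw [hh]; exact Algebra.commutes _ x
  -- key: the image under `φ` of a central element of `A` commutes with everything in `B`
  have key : ∀ z : A, (∀ x : A, z * x = x * z) → ∀ g : B, g * φ z = φ z * g := by
    intro z hz g
    obtain ⟨a, n, hab⟩ := hφgen g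
    have hzn : φ h ^ n * φ z = φ z * φ h ^ n := by
      rw [← map_pow, ← map_mul, ← map_mul]
      exact congrArg φ (Commute.pow_left ((hz h).symm) n)
    have hmain : (g * φ z) * φ h ^ n = (φ z * g) * φ h ^ n := by
      calc (g * φ z) * φ h ^ n = g * (φ z * φ h ^ n) := by rw [mul_assoc]
        _ = g * (φ h ^ n * φ z) := by rw [hzn]
        _ = (g * φ h ^ n) * φ z := by rw [mul_assoc]
        _ = φ a * φ z := by rw [hab]
        _ = φ (a * z) := by rw [map_mul]
        _ = φ (z * a) := by rw [hz]
        _ = φ z * φ a := by rw [map_mul]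
        _ = φ z * (g * φ h ^ n) := by rw [hab]
        _ = (φ z * g) * φ h ^ n := by rw [mul_assoc]
    exact (hu.pow n).mul_right_cancel hmain
  -- `φ h` commutes with everything
  have hkeyh : ∀ g : B, g * φ h = φ h * g := key h hcentral
  have hkeyhn : ∀ n : ℕ, ∀ g : B, g * φ h ^ n = φ h ^ n * g := by
    intro n g
    rw [← map_pow]
    refine key (h ^ n) ?_ g
    intro x
    exact Commute.pow_left (hcentral x) n
  ext b
  simp only [Set.mem_setOf_eq]
  constructor
  · -- forward direction
    intro hb
    have hbc : ∀ g : B, g * b = b * g := Semigroup.mem_center_iff.mp hb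
    obtain ⟨a, n, hab⟩ := hφgen b
    -- `φ a` commutes with everything
    have haP : ∀ g : B, g * φ a = φ a * g := by
      intro g
      calc g * φ a = g * (b * φ h ^ n) := by rw [hab]
        _ = (g * b) * φ h ^ n := by rw [mul_assoc]
        _ = (b * g) * φ h ^ n := by rw [hbc]
        _ = b * (g * φ h ^ n) := by rw [mul_assoc]
        _ = b * (φ h ^ n * g) := by rw [hkeyhn]
        _ = (b * φ h ^ n) * g := by rw [mul_assoc]
        _ = φ a * g := by rw [hab]
    -- the one-step approximation lemma
    have step : ∀ x : A, (∀ g : B, g * φ x = φ x * g) →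
        ∃ c : k, ∃ y : A, x = algebraMap k A c + h * y ∧ ∀ g : B, g * φ y = φ y * g := by
      intro x hx
      have hxc : φ x ∈ Set.center B := Semigroup.mem_center_iff.mpr hx
      have hπx : π x ∈ {q : Q | ∀ q' : Q, br q q' = 0} := hZred x hxc
      rw [hPcenter] at hπx
      obtain ⟨c, hc⟩ := hπx
      have hker : π (x - algebraMap k A c) = 0 := by
        rw [map_sub, AlgHom.commutes, hc, sub_self]
      obtain ⟨y, hy⟩ := (hπker _).mp hker
      refine ⟨c, y, by rw [← hy]; abel, ?_⟩
      intro g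
      have hcz' : ∀ g : B, g * φ (algebraMap k A c) = φ (algebraMap k A c) * g := by
        refine key _ (fun x => ?_)
        exact Algebra.commutes c x
      have hhy : φ h * φ y = φ x - φ (algebraMap k A c) := by
        rw [← map_mul, ← hy, map_sub]
      have hmain : φ h * (g * φ y) = φ h * (φ y * g) := by
        calc φ h * (g * φ y) = (φ h * g) * φ y := by rw [mul_assoc]
          _ = (g * φ h) * φ y := by rw [hkeyh]
          _ = g * (φ h * φ y) := by rw [mul_assoc]
          _ = g * (φ x - φ (algebraMap k A c)) := by rw [hhy]
          _ = g * φ x - g * φ (algebraMap k A c) := by rw [mul_sub]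
          _ = φ x * g - φ (algebraMap k A c) * g := by rw [hx, hcz']
          _ = (φ x - φ (algebraMap k A c)) * g := by rw [sub_mul]
          _ = (φ h * φ y) * g := by rw [hhy]
          _ = φ h * (φ y * g) := by rw [mul_assoc]
      exact hu.mul_left_cancel hmain
    -- build the sequence of approximations
    choose cf yf hcy hPy using step
    let F : {x : A // ∀ g : B, g * φ x = φ x * g} → {x : A // ∀ g : B, g * φ x = φ x * g} :=
      fun s => ⟨yf s.1 s.2, hPy s.1 s.2⟩
    let seq : ℕ → {x : A // ∀ g : B, g * φ x = φ x * g} := fun m => F^[m] ⟨a, haP⟩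
    let cs : ℕ → k := fun m => cf (seq m).1 (seq m).2
    have hseq_succ : ∀ m : ℕ, (seq m).1 = algebraMap k A (cs m) + h * (seq (m + 1)).1 := by
      intro m
      have : seq (m + 1) = F (seq m) := Function.iterate_succ_apply' F m _
      rw [this]
      exact hcy (seq m).1 (seq m).2
    have haux : ∀ m : ℕ,
        a = (∑ i ∈ Finset.range m, algebraMap k A (cs i) * h ^ i) + h ^ m * (seq m).1 := by
      intro m
      induction m with
      | zero => simp [seq]
      | succ j ih =>
        rw [ih, hseq_succ j, Finset.sum_range_succ]
        have h1 : h ^ j * (algebraMap k A (cs j) + h * (seq (j + 1)).1)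
            = algebraMap k A (cs j) * h ^ j + h ^ (j + 1) * (seq (j + 1)).1 := by
          rw [mul_add, Algebra.commutes, pow_succ, mul_assoc]
        rw [h1]
        abel
    -- the candidate power series
    set f : PowerSeries k := PowerSeries.mk cs with hf
    have hdvd : ∀ m : ℕ, ∃ g : PowerSeries k,
        f = (∑ i ∈ Finset.range m, PowerSeries.C (cs i) * PowerSeries.X ^ i)
          + PowerSeries.X ^ m * g := by
      intro m
      have hd : (PowerSeries.X : PowerSeries k) ^ m ∣
          f - ∑ i ∈ Finset.range m, PowerSeries.C (cs i) * PowerSeries.X ^ i := by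
        rw [PowerSeries.X_pow_dvd_iff]
        intro j hj
        rw [map_sub, map_sum]
        simp only [PowerSeries.coeff_C_mul, PowerSeries.coeff_X_pow, mul_ite, mul_one,
          mul_zero, Finset.sum_ite_eq, Finset.mem_range, hj, if_true, hf,
          PowerSeries.coeff_mk, sub_self]
      obtain ⟨g, hg⟩ := hd
      exact ⟨g, by rw [← hg]; ring⟩
    -- `a - algebraMap f` lies in every power of the ideal
    have hmem : ∀ m : ℕ, a - algebraMap (PowerSeries k) A f ∈
        ((Ideal.span {(PowerSeries.X : PowerSeries k)}) ^ m • ⊤ : Submodule (PowerSeries k) A) := by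
      intro m
      obtain ⟨g, hg⟩ := hdvd m
      have hmapT : algebraMap (PowerSeries k) A
          (∑ i ∈ Finset.range m, PowerSeries.C (cs i) * PowerSeries.X ^ i)
          = ∑ i ∈ Finset.range m, algebraMap k A (cs i) * h ^ i := by
        rw [map_sum]
        refine Finset.sum_congr rfl (fun i _ => ?_)
        have hC : (PowerSeries.C (R := k)) (cs i) = algebraMap k (PowerSeries k) (cs i) := by
          simp [PowerSeries.algebraMap_apply]
        rw [map_mul, map_pow, ← hh, hC, ← IsScalarTower.algebraMap_apply k (PowerSeries k) A]
      have hXg : algebraMap (PowerSeries k) A (PowerSeries.X ^ m * g)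
          = h ^ m * algebraMap (PowerSeries k) A g := by
        rw [map_mul, map_pow, hh]
      have hval : a - algebraMap (PowerSeries k) A f
          = h ^ m * ((seq m).1 - algebraMap (PowerSeries k) A g) := by
        rw [hg, map_add, hmapT, hXg, haux m, mul_sub]
        abel
      rw [hval]
      have hsm : h ^ m * ((seq m).1 - algebraMap (PowerSeries k) A g)
          = ((PowerSeries.X : PowerSeries k) ^ m) • ((seq m).1 - algebraMap (PowerSeries k) A g) := by
        rw [Algebra.smul_def, map_pow, ← hh]
      rw [hsm]
      exact Submodule.smul_mem_smul
        (Ideal.pow_mem_pow (Ideal.subset_span (Set.mem_singleton _)) m) Submodule.mem_top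
    have hsep : a - algebraMap (PowerSeries k) A f = 0 := by
      have hH : IsHausdorff (Ideal.span {(PowerSeries.X : PowerSeries k)}) A := inferInstance
      exact hH.haus _ (fun m => SModEq.zero.mpr (hmem m))
    have ha : a = algebraMap (PowerSeries k) A f := by
      rw [← sub_eq_zero]; exact hsep
    refine ⟨n, f, ?_⟩
    show φ (algebraMap (PowerSeries k) A f) = b * φ h ^ n
    rw [← ha]
    exact hab.symm
  · -- reverse direction
    rintro ⟨n, f, hbf⟩
    simp only at hbf
    have hc : ∀ g : B, g * φ (algebraMap (PowerSeries k) A f)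
        = φ (algebraMap (PowerSeries k) A f) * g :=
      key _ (fun x => Algebra.commutes f x)
    refine Semigroup.mem_center_iff.mpr (fun g => ?_)
    have hmain : (g * b) * φ h ^ n = (b * g) * φ h ^ n := by
      calc (g * b) * φ h ^ n = g * (b * φ h ^ n) := by rw [mul_assoc]
        _ = g * φ (algebraMap (PowerSeries k) A f) := by rw [hbf]
        _ = φ (algebraMap (PowerSeries k) A f) * g := by rw [hc]
        _ = (b * φ h ^ n) * g := by rw [hbf]
        _ = b * (φ h ^ n * g) := by rw [mul_assoc]
        _ = b * (g * φ h ^ n) := by rw [hkeyhn]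
        _ = (b * g) * φ h ^ n := by rw [mul_assoc]
    exact (hu.pow n).mul_right_cancel hmain
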